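/- arXiv:2007.13700 — 3 statements merged into one kernel-verified Lean document; each statement's English description precedes it below -/
import Mathlib

section
/- Let n be a positive integer and let p be a real polynomial of degree at most n satisfying p(1) = 1. Then max_{x ∈ [-1,1]} (1-x)·p(x)² = 2/(2n+1)² holds if and only if p = h_n, where h_n(x) = (1/(2n+1))·(1 + 2·∑_{k=1}^{n} T_k(x)). -/
open Polynomial Finset

noncomputable section

namespace DirichletSqAux

lemma natDegree_T_le : ∀ k : ℕ, (Polynomial.Chebyshev.T ℝ (k : ℤ)).natDegree ≤ k := by
  intro k
  induction k using Nat.twoStepInduction with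
  | zero => simp [Polynomial.Chebyshev.T_zero]
  | one => simp [Polynomial.Chebyshev.T_one]
  | more m ih1 ih2 =>
    have h : (Polynomial.Chebyshev.T ℝ ((m + 2 : ℕ) : ℤ)) =
        2 * Polynomial.X * Polynomial.Chebyshev.T ℝ ((m+1 : ℕ) : ℤ)
          - Polynomial.Chebyshev.T ℝ (m : ℤ) := by
      have := Polynomial.Chebyshev.T_add_two ℝ (m : ℤ)
      convert this using 2 <;> push_cast <;> ring_nf
    rw [h]
    refine le_trans (Polynomial.natDegree_sub_le _ _) ?_
    simp only [max_le_iff]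
    constructor
    · refine le_trans (Polynomial.natDegree_mul_le) ?_
      have h2 : (2 * Polynomial.X : ℝ[X]).natDegree ≤ 1 := by
        refine le_trans (Polynomial.natDegree_mul_le) ?_
        simp [Polynomial.natDegree_X]
      omega
    · omega

def H (n : ℕ) : ℝ[X] := Polynomial.C ((2 * (n : ℝ) + 1)⁻¹) *
    (1 + 2 * ∑ k ∈ Finset.Icc 1 n, Polynomial.Chebyshev.T ℝ (k : ℤ))

lemma natDegree_H_le (n : ℕ) : (H n).natDegree ≤ n := by
  refine le_trans (Polynomial.natDegree_mul_le) ?_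
  simp only [Polynomial.natDegree_C, zero_add]
  refine le_trans (Polynomial.natDegree_add_le _ _) ?_
  simp only [Polynomial.natDegree_one, max_le_iff]
  refine ⟨Nat.zero_le _, le_trans (Polynomial.natDegree_mul_le) ?_⟩
  have h2 : (2 : ℝ[X]).natDegree = 0 := by
    norm_num
  have hs : (∑ k ∈ Finset.Icc 1 n, Polynomial.Chebyshev.T ℝ (k : ℤ)).natDegree ≤ n := by
    refine Polynomial.natDegree_sum_le_of_forall_le _ _ ?_
    intro k hk
    exact le_trans (natDegree_T_le k) (Finset.mem_Icc.mp hk).2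
  omega

lemma dirichlet (n : ℕ) (ξ : ℝ) :
    Real.sin (ξ/2) * (1 + 2 * ∑ k ∈ Finset.Icc 1 n, Real.cos (k * ξ))
      = Real.sin ((2*(n:ℝ)+1) * ξ / 2) := by
  induction n with
  | zero =>
    rw [show Finset.Icc 1 0 = (∅ : Finset ℕ) from rfl]
    norm_num
  | succ m ih =>
    rw [Finset.sum_Icc_succ_top (by omega : 1 ≤ m+1)]
    have expand : Real.sin ((2*((m:ℝ)+1)+1) * ξ / 2)
        = Real.sin ((2*(m:ℝ)+1) * ξ / 2) + 2 * Real.sin (ξ/2) * Real.cos (((m:ℝ)+1) * ξ) := by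
      have h1 : (2*((m:ℝ)+1)+1) * ξ / 2 = ((m:ℝ)+1)*ξ + ξ/2 := by ring
      have h2 : (2*(m:ℝ)+1) * ξ / 2 = ((m:ℝ)+1)*ξ - ξ/2 := by ring
      rw [h1, h2, Real.sin_add, Real.sin_sub]; ring
    push_cast
    push_cast at expand
    rw [expand, ← ih]
    ring

lemma H_eval_cos (n : ℕ) (ξ : ℝ) :
    (H n).eval (Real.cos ξ)
      = (2*(n:ℝ)+1)⁻¹ * (1 + 2 * ∑ k ∈ Finset.Icc 1 n, Real.cos (k * ξ)) := by
  simp only [H, Polynomial.eval_mul, Polynomial.eval_C, Polynomial.eval_add,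
    Polynomial.eval_one, Polynomial.eval_ofNat, Polynomial.eval_finset_sum,
    Polynomial.Chebyshev.T_real_cos]
  push_cast
  ring

lemma Npos (n : ℕ) : (0:ℝ) < 2*(n:ℝ)+1 := by positivity

lemma sin_H (n : ℕ) (ξ : ℝ) :
    Real.sin (ξ/2) * (H n).eval (Real.cos ξ)
      = (2*(n:ℝ)+1)⁻¹ * Real.sin ((2*(n:ℝ)+1) * ξ / 2) := by
  rw [H_eval_cos, ← dirichlet n ξ]; ring

lemma sq_eval (n : ℕ) (ξ : ℝ) :
    (1 - Real.cos ξ) * (H n).eval (Real.cos ξ) ^ 2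
      = 2 * Real.sin ((2*(n:ℝ)+1) * ξ / 2) ^ 2 / (2*(n:ℝ)+1) ^ 2 := by
  have h2 : Real.cos ξ = 2 * Real.cos (ξ/2)^2 - 1 := by
    have := Real.cos_two_mul (ξ/2); rwa [show 2*(ξ/2) = ξ by ring] at this
  have h3 := Real.sin_sq_add_cos_sq (ξ/2)
  have h1 : 1 - Real.cos ξ = 2 * Real.sin (ξ/2)^2 := by nlinarith
  have key := sin_H n ξ
  have hN := Npos n
  have h4 : (1 - Real.cos ξ) * (H n).eval (Real.cos ξ) ^ 2
      = 2 * (Real.sin (ξ/2) * (H n).eval (Real.cos ξ))^2 := by rw [h1]; ring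
  rw [h4, key]
  field_simp

lemma H_bound (n : ℕ) {x : ℝ} (hx : x ∈ Set.Icc (-1:ℝ) 1) :
    (1 - x) * (H n).eval x ^ 2 ≤ 2 / (2*(n:ℝ)+1) ^ 2 := by
  have hc : Real.cos (Real.arccos x) = x := Real.cos_arccos hx.1 hx.2
  have h := sq_eval n (Real.arccos x)
  rw [hc] at h
  rw [h]
  have hs : Real.sin ((2*(n:ℝ)+1) * Real.arccos x / 2) ^ 2 ≤ 1 := Real.sin_sq_le_one _
  have hN : (0:ℝ) < (2*(n:ℝ)+1)^2 := by positivity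
  rw [div_le_div_iff₀ hN hN]
  nlinarith

def θ (n : ℕ) (j : Fin (n+1)) : ℝ := (2*(j:ℝ)+1) * Real.pi / (2*(n:ℝ)+1)

def v (n : ℕ) (j : Fin (n+1)) : ℝ := Real.cos (θ n j)

lemma v_def (n : ℕ) (j : Fin (n+1)) : v n j = Real.cos (θ n j) := rfl

lemma θ_pos (n : ℕ) (j : Fin (n+1)) : 0 < θ n j := by
  have := Real.pi_pos
  have hN := Npos n
  apply div_pos _ hN
  positivity

lemma θ_le_pi (n : ℕ) (j : Fin (n+1)) : θ n j ≤ Real.pi := by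
  have := Real.pi_pos
  have hN := Npos n
  rw [θ, div_le_iff₀ hN]
  have hj : (j:ℝ) ≤ (n:ℝ) := by exact_mod_cast Nat.cast_le.mpr (Nat.lt_succ_iff.mp j.2)
  nlinarith

lemma θ_strictMono (n : ℕ) : StrictMono (θ n) := by
  intro i j hij
  have hpi := Real.pi_pos
  have hN := Npos n
  have hij' : (i:ℝ) < (j:ℝ) := by exact_mod_cast hij
  rw [θ, θ, div_lt_div_iff₀ hN hN]
  have h := mul_lt_mul_of_pos_right (mul_lt_mul_of_pos_right
    (show 2*(i:ℝ)+1 < 2*(j:ℝ)+1 by linarith) hpi) hN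
  linarith

lemma v_strictAnti (n : ℕ) : StrictAnti (v n) := by
  intro i j hij
  have h1 : θ n i ∈ Set.Icc 0 Real.pi := ⟨(θ_pos n i).le, θ_le_pi n i⟩
  have h2 : θ n j ∈ Set.Icc 0 Real.pi := ⟨(θ_pos n j).le, θ_le_pi n j⟩
  exact Real.strictAntiOn_cos h1 h2 (θ_strictMono n hij)

lemma v_mem (n : ℕ) (j : Fin (n+1)) : v n j ∈ Set.Icc (-1:ℝ) 1 :=
  ⟨Real.neg_one_le_cos _, Real.cos_le_one _⟩

lemma v_lt_one (n : ℕ) (j : Fin (n+1)) : v n j < 1 := by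
  have h := Real.strictAntiOn_cos (Set.left_mem_Icc.mpr Real.pi_pos.le)
    ⟨(θ_pos n j).le, θ_le_pi n j⟩ (θ_pos n j)
  rw [Real.cos_zero] at h
  exact h

lemma v_injOn (n : ℕ) : Set.InjOn (v n) ↑(Finset.univ : Finset (Fin (n+1))) :=
  fun a _ b _ h => (v_strictAnti n).injective h

lemma neg_one_pow_sq (j : ℕ) : ((-1:ℝ)^j)^2 = 1 := by
  rw [← pow_mul, mul_comm, pow_mul]
  norm_num

lemma sin_node (n : ℕ) (j : Fin (n+1)) :
    Real.sin ((2*(n:ℝ)+1) * θ n j / 2) = (-1)^(j:ℕ) := by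
  have hN := (Npos n).ne'
  have harg : (2*(n:ℝ)+1) * θ n j / 2 = (j:ℝ) * Real.pi + Real.pi/2 := by
    rw [θ]
    field_simp
  rw [harg, Real.sin_add_pi_div_two]
  have h := Real.cos_nat_mul_pi_sub 0 (j:ℕ)
  simpa using h

lemma node_eq (n : ℕ) (j : Fin (n+1)) :
    (1 - v n j) * (H n).eval (v n j) ^ 2 = 2 / (2*(n:ℝ)+1) ^ 2 := by
  have h := sq_eval n (θ n j)
  rw [sin_node, neg_one_pow_sq] at h
  rw [v_def, h]
  ring

lemma H_sign (n : ℕ) (j : Fin (n+1)) :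
    0 < (-1)^(j:ℕ) * (H n).eval (v n j) := by
  have key := sin_H n (θ n j)
  rw [sin_node] at key
  have hsin : 0 < Real.sin (θ n j / 2) := by
    apply Real.sin_pos_of_pos_of_lt_pi
    · exact half_pos (θ_pos n j)
    · have h1 := θ_le_pi n j
      have := Real.pi_pos
      linarith
  have hN := Npos n
  have h2 : Real.sin (θ n j / 2) * ((-1)^(j:ℕ) * (H n).eval (v n j))
      = (2*(n:ℝ)+1)⁻¹ := by
    rw [v_def]
    calc Real.sin (θ n j / 2) * ((-1)^(j:ℕ) * (H n).eval (Real.cos (θ n j)))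
        = (-1)^(j:ℕ) * (Real.sin (θ n j / 2) * (H n).eval (Real.cos (θ n j))) := by ring
      _ = (-1)^(j:ℕ) * ((2*(n:ℝ)+1)⁻¹ * (-1)^(j:ℕ)) := by rw [key]
      _ = (2*(n:ℝ)+1)⁻¹ * ((-1:ℝ)^(j:ℕ))^2 := by ring
      _ = (2*(n:ℝ)+1)⁻¹ := by rw [neg_one_pow_sq]; ring
  have h3 : 0 < Real.sin (θ n j / 2) * ((-1)^(j:ℕ) * (H n).eval (v n j)) := by
    rw [h2]; positivity
  nlinarith

def μ (n : ℕ) (j : Fin (n+1)) : ℝ := (Lagrange.basis Finset.univ (v n) j).eval 1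

lemma μ_eval (n : ℕ) (j : Fin (n+1)) :
    μ n j = ∏ i ∈ Finset.univ.erase j, ((v n j - v n i)⁻¹ * (1 - v n i)) := by
  rw [μ, Lagrange.basis, Polynomial.eval_prod]
  refine Finset.prod_congr rfl fun i _ => ?_
  rw [Lagrange.basisDivisor]
  simp [Polynomial.eval_mul]

lemma μ_sign (n : ℕ) (j : Fin (n+1)) : 0 < (-1)^(j:ℕ) * μ n j := by
  classical
  set f : Fin (n+1) → ℝ := fun i => (v n j - v n i)⁻¹ * (1 - v n i) with hf
  have herase : (Finset.univ : Finset (Fin (n+1))).erase j = Finset.Iio j ∪ Finset.Ioi j := by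
    ext i
    simp only [Finset.mem_erase, Finset.mem_univ, and_true, Finset.mem_union,
      Finset.mem_Iio, Finset.mem_Ioi]
    exact ⟨fun h => h.lt_or_gt, fun h => h.elim (fun h' => h'.ne) (fun h' => h'.ne')⟩
  have hdisj : Disjoint (Finset.Iio j) (Finset.Ioi j) := by
    rw [Finset.disjoint_left]
    intro a ha ha'
    exact absurd (Finset.mem_Iio.mp ha) (not_lt.mpr (Finset.mem_Ioi.mp ha').le)
  have hpos_hi : 0 < ∏ i ∈ Finset.Ioi j, f i := by
    apply Finset.prod_pos
    intro i hi
    have hij : j < i := Finset.mem_Ioi.mp hi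
    have h1 : v n i < v n j := v_strictAnti n hij
    have h2 : v n i < 1 := v_lt_one n i
    apply mul_pos (inv_pos.mpr (by linarith)) (by linarith)
  have hneg_lo : ∀ i ∈ Finset.Iio j, f i = (-1) * (-(f i)) := by
    intro i _; ring
  have hpos_lo : ∀ i ∈ Finset.Iio j, 0 < -(f i) := by
    intro i hi
    have hij : i < j := Finset.mem_Iio.mp hi
    have h1 : v n j < v n i := v_strictAnti n hij
    have h2 : v n i < 1 := v_lt_one n i
    have : f i < 0 := mul_neg_of_neg_of_pos (inv_neg''.mpr (by linarith)) (by linarith)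
    linarith
  have hlo : ∏ i ∈ Finset.Iio j, f i = (-1:ℝ)^(j:ℕ) * ∏ i ∈ Finset.Iio j, (-(f i)) := by
    rw [Finset.prod_congr rfl hneg_lo, Finset.prod_mul_distrib, Finset.prod_const,
      Fin.card_Iio]
  have hμ : μ n j = (-1:ℝ)^(j:ℕ) *
      ((∏ i ∈ Finset.Iio j, (-(f i))) * ∏ i ∈ Finset.Ioi j, f i) := by
    rw [μ_eval, herase, Finset.prod_union hdisj, hlo]
    ring
  rw [hμ]
  have hplo : 0 < ∏ i ∈ Finset.Iio j, (-(f i)) := Finset.prod_pos hpos_lo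
  calc (0:ℝ) < ((∏ i ∈ Finset.Iio j, (-(f i))) * ∏ i ∈ Finset.Ioi j, f i) :=
        mul_pos hplo hpos_hi
    _ = (-1:ℝ)^(j:ℕ) * ((-1:ℝ)^(j:ℕ) *
        ((∏ i ∈ Finset.Iio j, (-(f i))) * ∏ i ∈ Finset.Ioi j, f i)) := by
        rw [← mul_assoc, ← pow_add, ← two_mul, pow_mul]
        norm_num

lemma interp_eval_one (n : ℕ) {f : ℝ[X]} (hf : f.natDegree ≤ n) :
    f.eval 1 = ∑ j : Fin (n+1), f.eval (v n j) * μ n j := by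
  classical
  have hdeg : f.degree < ((Finset.univ : Finset (Fin (n+1))).card : WithBot ℕ) := by
    rw [Finset.card_univ, Fintype.card_fin]
    refine lt_of_le_of_lt Polynomial.degree_le_natDegree ?_
    exact_mod_cast Nat.lt_succ_of_le hf
  have h := Lagrange.eq_interpolate (v_injOn n) hdeg
  conv_lhs => rw [h]
  rw [Lagrange.interpolate_apply, Polynomial.eval_finset_sum]
  refine Finset.sum_congr rfl fun i _ => ?_
  rw [Polynomial.eval_mul, Polynomial.eval_C, μ]

lemma H_eval_one (n : ℕ) : (H n).eval 1 = 1 := by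
  have hT : ∀ k : ℕ, (Polynomial.Chebyshev.T ℝ (k : ℤ)).eval 1 = 1 := by
    intro k
    have := Polynomial.Chebyshev.T_real_cos 0 (k : ℤ)
    simpa using this
  have hN := (Npos n).ne'
  simp only [H, Polynomial.eval_mul, Polynomial.eval_C, Polynomial.eval_add,
    Polynomial.eval_one, Polynomial.eval_ofNat, Polynomial.eval_finset_sum, hT]
  rw [Finset.sum_const, Nat.card_Icc]
  simp only [nsmul_eq_mul, mul_one]
  have : ((n + 1 - 1 : ℕ) : ℝ) = (n:ℝ) := by push_cast [Nat.add_sub_cancel]; ring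
  rw [this]
  field_simp
  ring

end DirichletSqAux

open DirichletSqAux

theorem dirichlet_square_equality_case
    (n : ℕ) (hn : 1 ≤ n) (p : Polynomial ℝ)
    (hdeg : p.natDegree ≤ n)
    (hone : p.eval 1 = 1) :
    sSup ((fun x : ℝ => (1 - x) * p.eval x ^ 2) '' Set.Icc (-1 : ℝ) 1) =
        2 / (2 * (n : ℝ) + 1) ^ 2 ↔
      p = Polynomial.C ((2 * (n : ℝ) + 1)⁻¹) *
            (1 + 2 * ∑ k ∈ Finset.Icc 1 n, Polynomial.Chebyshev.T ℝ (k : ℤ)) := by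
  have hHdef : (Polynomial.C ((2 * (n : ℝ) + 1)⁻¹) *
      (1 + 2 * ∑ k ∈ Finset.Icc 1 n, Polynomial.Chebyshev.T ℝ (k : ℤ))) = H n := rfl
  rw [hHdef]
  constructor
  · intro hsup
    -- forward direction
    have hcont : ContinuousOn (fun x : ℝ => (1 - x) * p.eval x ^ 2) (Set.Icc (-1:ℝ) 1) :=
      (((continuous_const.sub continuous_id).mul ((p.continuous).pow 2)).continuousOn)
    have hcomp : IsCompact ((fun x : ℝ => (1 - x) * p.eval x ^ 2) '' Set.Icc (-1 : ℝ) 1) :=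
      isCompact_Icc.image_of_continuousOn hcont
    have hbdd := hcomp.bddAbove
    have hle : ∀ j : Fin (n+1),
        (1 - v n j) * p.eval (v n j) ^ 2 ≤ 2 / (2*(n:ℝ)+1)^2 := by
      intro j
      rw [← hsup]
      exact le_csSup hbdd ⟨v n j, v_mem n j, rfl⟩
    have hsq : ∀ j : Fin (n+1), p.eval (v n j)^2 ≤ (H n).eval (v n j)^2 := by
      intro j
      have h1 := hle j
      rw [← node_eq n j] at h1
      have h2 : 0 < 1 - v n j := by linarith [v_lt_one n j]
      exact le_of_mul_le_mul_left (by linarith) h2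
    have habs : ∀ j : Fin (n+1), |p.eval (v n j)| ≤ |(H n).eval (v n j)| := by
      intro j
      rw [← Real.sqrt_sq_eq_abs, ← Real.sqrt_sq_eq_abs]
      exact Real.sqrt_le_sqrt (hsq j)
    have hterm : ∀ j : Fin (n+1),
        p.eval (v n j) * μ n j ≤ (H n).eval (v n j) * μ n j := by
      intro j
      have hH := H_sign n j
      have hμ := μ_sign n j
      have habsH : |(H n).eval (v n j)| = (-1)^(j:ℕ) * (H n).eval (v n j) := by
        rw [← abs_of_pos hH, abs_mul, abs_pow, abs_neg, abs_one, one_pow, one_mul]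
      have habsμ : |μ n j| = (-1)^(j:ℕ) * μ n j := by
        rw [← abs_of_pos hμ, abs_mul, abs_pow, abs_neg, abs_one, one_pow, one_mul]
      calc p.eval (v n j) * μ n j ≤ |p.eval (v n j) * μ n j| := le_abs_self _
        _ = |p.eval (v n j)| * |μ n j| := abs_mul _ _
        _ ≤ |(H n).eval (v n j)| * |μ n j| :=
            mul_le_mul_of_nonneg_right (habs j) (abs_nonneg _)
        _ = ((-1)^(j:ℕ) * (H n).eval (v n j)) * ((-1)^(j:ℕ) * μ n j) := by
            rw [habsH, habsμ]
        _ = ((-1:ℝ)^(j:ℕ))^2 * ((H n).eval (v n j) * μ n j) := by ring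
        _ = (H n).eval (v n j) * μ n j := by rw [neg_one_pow_sq]; ring
    have hsum1 : p.eval 1 = ∑ j : Fin (n+1), p.eval (v n j) * μ n j :=
      interp_eval_one n hdeg
    have hsum2 : (H n).eval 1 = ∑ j : Fin (n+1), (H n).eval (v n j) * μ n j :=
      interp_eval_one n (natDegree_H_le n)
    have hsums : ∑ j : Fin (n+1), p.eval (v n j) * μ n j
        = ∑ j : Fin (n+1), (H n).eval (v n j) * μ n j := by
      rw [← hsum1, ← hsum2, hone, H_eval_one]
    have heqterm := (Finset.sum_eq_sum_iff_of_le (fun j _ => hterm j)).mp hsums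
    have hvals : ∀ j : Fin (n+1), p.eval (v n j) = (H n).eval (v n j) := by
      intro j
      have h1 := heqterm j (Finset.mem_univ j)
      have hμne : μ n j ≠ 0 := by
        intro h0
        have := μ_sign n j
        rw [h0, mul_zero] at this
        exact lt_irrefl 0 this
      exact mul_right_cancel₀ hμne h1
    -- conclude p = H n
    have hdeg2 : (p - H n).degree < ((Finset.univ : Finset (Fin (n+1))).card : WithBot ℕ) := by
      rw [Finset.card_univ, Fintype.card_fin]
      refine lt_of_le_of_lt Polynomial.degree_le_natDegree ?_
      have : (p - H n).natDegree ≤ n :=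
        le_trans (Polynomial.natDegree_sub_le _ _) (by simp [hdeg, natDegree_H_le n])
      exact_mod_cast Nat.lt_succ_of_le this
    have hinterp := Lagrange.eq_interpolate (v_injOn n) hdeg2
    have hzero : (fun i : Fin (n+1) => (p - H n).eval (v n i)) = fun _ => 0 := by
      funext i
      rw [Polynomial.eval_sub, hvals i, sub_self]
    rw [hzero] at hinterp
    have : p - H n = 0 := by
      rw [hinterp]
      have : (fun _ : Fin (n+1) => (0:ℝ)) = (0 : Fin (n+1) → ℝ) := rfl
      rw [this, map_zero]
    exact sub_eq_zero.mp this
  · intro hp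
    subst hp
    have hcont : ContinuousOn (fun x : ℝ => (1 - x) * (H n).eval x ^ 2) (Set.Icc (-1:ℝ) 1) :=
      (((continuous_const.sub continuous_id).mul (((H n).continuous).pow 2)).continuousOn)
    have hcomp : IsCompact ((fun x : ℝ => (1 - x) * (H n).eval x ^ 2) '' Set.Icc (-1 : ℝ) 1) :=
      isCompact_Icc.image_of_continuousOn hcont
    apply le_antisymm
    · apply csSup_le
      · exact ⟨(1 - 1) * (H n).eval 1 ^ 2, ⟨1, Set.right_mem_Icc.mpr (by norm_num), rfl⟩⟩
      · rintro y ⟨x, hx, rfl⟩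
        exact H_bound n hx
    · apply le_csSup hcomp.bddAbove
      exact ⟨v n 0, v_mem n 0, node_eq n 0⟩
end
end

section
/- For every positive integer n, the polynomials h_n and g_{2n} satisfy h_n(x)² = g_{2n}(x) as polynomials, i.e., (2n+1)²·(1-x)·h_n(x)² = 1 - T_{2n+1}(x) for all x, where h_n(x) = (1/(2n+1))·(1 + 2·∑_{k=1}^{n} T_k(x)). -/
open Polynomial Polynomial.Chebyshev

noncomputable def Sp (n : ℕ) : ℝ[X] :=
  1 + 2 * ∑ k ∈ Finset.Icc 1 n, Chebyshev.T ℝ (k : ℤ)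

lemma lemA (n : ℕ) : (1 - X) * Sp n = T ℝ n - T ℝ (n + 1) := by
  induction n with
  | zero => simp [Sp, Chebyshev.T_zero, Chebyshev.T_one]
  | succ m ih =>
    have hS : Sp (m+1) = Sp m + 2 * T ℝ ((m:ℤ)+1) := by
      rw [Sp, Sp, Finset.sum_Icc_succ_top (by omega)]
      push_cast
      ring
    have h2 := Chebyshev.T_add_two ℝ (m : ℤ)
    rw [hS]
    push_cast
    have e : ((m:ℤ)+1+1) = ((m:ℤ)+2) := by ring
    rw [e]
    linear_combination ih + h2

lemma lemB (n : ℕ) : (1 - X) * (Sp n)^2 = 1 - T ℝ (2*(n:ℤ) + 1) := by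
  induction n with
  | zero => simp [Sp, Chebyshev.T_one]
  | succ m ih =>
    have hS : Sp (m+1) = Sp m + 2 * T ℝ ((m:ℤ)+1) := by
      rw [Sp, Sp, Finset.sum_Icc_succ_top (by omega)]
      push_cast; ring
    have hA := lemA m
    have h1 := Chebyshev.T_mul_T ℝ ((m:ℤ)+1) ((m:ℤ))      -- 2 T_{m+1} T_m = T_{2m+1} + T_1
    have h2 := Chebyshev.T_mul_T ℝ ((m:ℤ)+1) ((m:ℤ)+1)    -- 2 T_{m+1}^2 = T_{2m+2} + T_0
    have h3 := Chebyshev.T_mul_T ℝ 1 (2*(m:ℤ)+2)          -- 2 T_1 T_{2m+2} = T_{2m+3} + T_{2m+1}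
    have hT0 : T ℝ 0 = 1 := Chebyshev.T_zero ℝ
    have hT1 : T ℝ 1 = X := Chebyshev.T_one ℝ
    rw [hS]
    push_cast
    have e1 : ((m:ℤ)+1+1) = ((m:ℤ)+2) := by ring
    have e2 : (2*((m:ℤ)+1)+1) = (2*(m:ℤ)+3) := by ring
    have e3 : ((m:ℤ)+1+((m:ℤ)+1)) = (2*(m:ℤ)+2) := by ring
    have e4 : ((m:ℤ)+1+(m:ℤ)) = (2*(m:ℤ)+1) := by ring
    have e5 : ((m:ℤ)+1-(m:ℤ)) = (1:ℤ) := by ring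
    have e6 : ((m:ℤ)+1-((m:ℤ)+1)) = (0:ℤ) := by ring
    have e7 : ((1:ℤ)+(2*(m:ℤ)+2)) = (2*(m:ℤ)+3) := by ring
    have e8 : ((1:ℤ)-(2*(m:ℤ)+2)) = -(2*(m:ℤ)+1) := by ring
    have hneg : T ℝ (-(2*(m:ℤ)+1)) = T ℝ (2*(m:ℤ)+1) := Chebyshev.T_neg ℝ _
    rw [e4, e5, hT1] at h1
    rw [e3, e6, hT0] at h2
    rw [e7, e8, hT1, hneg] at h3
    rw [e2]
    linear_combination ih + 4 * T ℝ ((m:ℤ)+1) * hA + 2 * h1 - 2 * (X:ℝ[X]) * h2 - h3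

theorem dirichlet_squared_is_fejer
    (n : ℕ) (hn : 1 ≤ n) :
    ∀ x : ℝ,
      (2 * (n : ℝ) + 1) ^ 2 * (1 - x) *
          ((Polynomial.C ((2 * (n : ℝ) + 1)⁻¹) *
              (1 + 2 * ∑ k ∈ Finset.Icc 1 n, Polynomial.Chebyshev.T ℝ (k : ℤ))).eval x) ^ 2 =
        1 - (Polynomial.Chebyshev.T ℝ (2 * (n : ℤ) + 1)).eval x := by
  intro x
  have hB := congrArg (Polynomial.eval x) (lemB n)
  simp only [Sp, eval_mul, eval_sub, eval_one, eval_X, eval_pow] at hB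
  have hne : (2 * (n : ℝ) + 1) ≠ 0 := by positivity
  rw [eval_mul, eval_C, mul_pow]
  have hc : (2 * (n : ℝ) + 1) ^ 2 * ((2 * (n : ℝ) + 1)⁻¹) ^ 2 = 1 := by
    rw [← mul_pow, mul_inv_cancel₀ hne, one_pow]
  calc (2 * (n : ℝ) + 1) ^ 2 * (1 - x) *
      (((2 * (n : ℝ) + 1)⁻¹) ^ 2 * (eval x (1 + 2 * ∑ k ∈ Finset.Icc 1 n, T ℝ (k : ℤ))) ^ 2)
      = ((2 * (n : ℝ) + 1) ^ 2 * ((2 * (n : ℝ) + 1)⁻¹) ^ 2) *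
        ((1 - x) * (eval x (1 + 2 * ∑ k ∈ Finset.Icc 1 n, T ℝ (k : ℤ))) ^ 2) := by ring
    _ = 1 - eval x (T ℝ (2 * (n:ℤ) + 1)) := by rw [hc, one_mul, hB]
end

section
/- For every positive integer n, the polynomial (1-X) divides 1 - T_{n+1}(X), the quotient polynomial q with (1-X)·q(X) = 1 - T_{n+1}(X) has degree n, satisfies q(1) = (n+1)², and satisfies q(x) ≥ 0 for all x ∈ [-1,1]. -/
open Polynomial

lemma T_deg_coeff (n : ℕ) :
    (Chebyshev.T ℝ (n : ℤ)).natDegree = n ∧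
      (Chebyshev.T ℝ (n : ℤ)).coeff n = 2 ^ (n - 1) := by
  induction n using Nat.twoStepInduction with
  | zero => simp [Chebyshev.T_zero]
  | one => simp [Chebyshev.T_one]
  | more n ih ih1 =>
    obtain ⟨hd, hc⟩ := ih
    obtain ⟨hd1, hc1⟩ := ih1
    have hrec : Chebyshev.T ℝ ((n + 2 : ℕ) : ℤ)
        = 2 * X * Chebyshev.T ℝ ((n + 1 : ℕ) : ℤ) - Chebyshev.T ℝ (n : ℤ) := by
      push_cast
      exact Chebyshev.T_add_two ℝ n
    set T1 := Chebyshev.T ℝ ((n + 1 : ℕ) : ℤ)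
    set T0 := Chebyshev.T ℝ (n : ℤ)
    have hT1ne : T1 ≠ 0 := by
      intro h
      rw [h] at hc1
      simp at hc1
      exact (pow_ne_zero _ two_ne_zero) hc1.symm
    have hcoeff : (2 * X * T1 - T0).coeff (n + 2) = 2 ^ (n + 1) := by
      have h0 : T0.coeff (n + 2) = 0 :=
        coeff_eq_zero_of_natDegree_lt (by omega)
      have h1 : (2 * X * T1).coeff (n + 2) = 2 * T1.coeff (n + 1) := by
        rw [mul_assoc]
        simp [coeff_X_mul]
      rw [coeff_sub, h0, h1, hc1]
      simp [pow_succ]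
      ring
    have hle : (2 * X * T1 - T0).natDegree ≤ n + 2 := by
      refine (natDegree_sub_le _ _).trans ?_
      simp only [sup_le_iff]
      constructor
      · refine (natDegree_mul_le).trans ?_
        have : (2 * X : ℝ[X]).natDegree = 1 := by
          simpa using natDegree_C_mul_X (2 : ℝ) two_ne_zero
        omega
      · omega
    have hdeg : (2 * X * T1 - T0).natDegree = n + 2 :=
      natDegree_eq_of_le_of_coeff_ne_zero hle (by rw [hcoeff]; positivity)
    rw [hrec]
    refine ⟨hdeg, ?_⟩
    simpa using hcoeff

lemma U_eval_one (n : ℕ) : (Chebyshev.U ℝ (n : ℤ)).eval 1 = n + 1 := by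
  induction n using Nat.twoStepInduction with
  | zero => simp [Chebyshev.U_zero]
  | one => norm_num [Chebyshev.U_one]
  | more n ih ih1 =>
    have hrec : Chebyshev.U ℝ ((n + 2 : ℕ) : ℤ)
        = 2 * X * Chebyshev.U ℝ ((n + 1 : ℕ) : ℤ) - Chebyshev.U ℝ (n : ℤ) := by
      push_cast
      exact Chebyshev.U_add_two ℝ n
    rw [hrec]
    simp only [eval_sub, eval_mul, eval_ofNat, eval_X, ih, ih1]
    push_cast
    ring

theorem fejer_polynomial_properties
    (n : ℕ) (hn : 1 ≤ n) :
    ((1 - Polynomial.X : Polynomial ℝ) ∣ (1 - Polynomial.Chebyshev.T ℝ ((n : ℤ) + 1))) ∧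
      ∀ q : Polynomial ℝ,
        (1 - Polynomial.X) * q = 1 - Polynomial.Chebyshev.T ℝ ((n : ℤ) + 1) →
          q.natDegree = n ∧ q.eval 1 = ((n : ℝ) + 1) ^ 2 ∧
            ∀ x ∈ Set.Icc (-1 : ℝ) 1, 0 ≤ q.eval x := by
  set T1 : ℝ[X] := Chebyshev.T ℝ ((n : ℤ) + 1) with hT1def
  have hcast : ((n : ℤ) + 1) = ((n + 1 : ℕ) : ℤ) := by push_cast; ring
  have hTeval1 : T1.eval 1 = 1 := by
    have h := Chebyshev.T_real_cos (θ := 0) (n := (n : ℤ) + 1)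
    simp [hT1def]
  have hdvd : (1 - X : ℝ[X]) ∣ (1 - T1) := by
    have h : (X - C 1 : ℝ[X]) ∣ (1 - T1) := by
      rw [dvd_iff_isRoot]
      simp [IsRoot, hTeval1]
    have he : (1 - X : ℝ[X]) = -(X - C 1) := by rw [C_1]; ring
    rw [he]
    exact (neg_dvd).mpr h
  have hdegT : T1.natDegree = n + 1 := by
    rw [hT1def, hcast]
    exact (T_deg_coeff (n + 1)).1
  have hdegP : (1 - T1).natDegree = n + 1 := by
    have : (1 - T1) = -(T1 - C 1) := by rw [C_1]; ring
    rw [this, natDegree_neg, natDegree_sub_C, hdegT]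
  have hPne : (1 - T1) ≠ 0 := by
    intro h
    rw [h] at hdegP
    simp at hdegP
  refine ⟨hdvd, fun q hq => ?_⟩
  have hqne : q ≠ 0 := by
    rintro rfl
    rw [mul_zero] at hq
    exact hPne hq.symm
  have h1Xne : (1 - X : ℝ[X]) ≠ 0 := by
    intro h
    have := congrArg (natDegree) h
    have he : (1 - X : ℝ[X]) = -(X - C 1) := by rw [C_1]; ring
    rw [he, natDegree_neg, natDegree_X_sub_C] at this
    simp at this
  have hdeg1X : (1 - X : ℝ[X]).natDegree = 1 := by
    have he : (1 - X : ℝ[X]) = -(X - C 1) := by rw [C_1]; ring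
    rw [he, natDegree_neg, natDegree_X_sub_C]
  have hdegq : q.natDegree = n := by
    have := congrArg natDegree hq
    rw [natDegree_mul h1Xne hqne, hdeg1X, hdegP] at this
    omega
  have hder := congrArg derivative hq
  have hderL : derivative ((1 - X) * q) = derivative (1 - X) * q + (1 - X) * derivative q :=
    derivative_mul
  have hUeval : (Chebyshev.U ℝ ((n : ℤ))).eval 1 = (n : ℝ) + 1 := U_eval_one n
  have heval1 := congrArg (eval 1) hder
  rw [hderL, hT1def] at heval1
  simp only [derivative_sub, derivative_one, derivative_X] at heval1
  rw [Chebyshev.T_derivative_eq_U, add_sub_cancel_right] at heval1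
  simp only [derivative_sub, derivative_one, derivative_X, zero_sub, eval_add, eval_mul,
    eval_neg, eval_sub, eval_one, eval_X, eval_intCast, sub_self, zero_mul, add_zero,
    neg_mul, one_mul, mul_zero, hUeval] at heval1
  have hqeval1 : q.eval 1 = ((n : ℝ) + 1) ^ 2 := by
    push_cast at heval1
    nlinarith [heval1]
  refine ⟨hdegq, hqeval1, fun x hx => ?_⟩
  have hTle : T1.eval x ≤ 1 := by
    have hxc : Real.cos (Real.arccos x) = x := Real.cos_arccos hx.1 hx.2
    rw [← hxc, hT1def, Chebyshev.T_real_cos]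
    exact Real.cos_le_one _
  rcases lt_or_eq_of_le hx.2 with hlt | heq
  · have hev := congrArg (eval x) hq
    simp only [eval_mul, eval_sub, eval_one, eval_X] at hev
    nlinarith
  · rw [heq, hqeval1]
    positivity
end
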